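/- For 0<q<1 and a nonnegative integer n, the finite sum ∑_{k=0}^n ((q^{-n};q)_k (a x;q)_k/(q;q)_k) q^k = (a x)^n, i.e. ₂Φ₁(q^{-n}, ax; 0; q; q) = (ax)^n. -/

import Mathlib

open Finset

noncomputable def qPoch (q a : ℂ) (n : ℕ) : ℂ := ∏ k ∈ Finset.range n, (1 - a * q ^ k)

noncomputable def qPochInf (q a : ℂ) : ℂ := ∏' k : ℕ, (1 - a * q ^ k)

noncomputable def cauchyP (q x y : ℂ) (n : ℕ) : ℂ := ∏ k ∈ Finset.range n, (x - q ^ k * y)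

noncomputable def qBinom (q : ℂ) (n k : ℕ) : ℂ := qPoch q q n / (qPoch q q k * qPoch q q (n - k))

noncomputable def Dq (q : ℂ) (f : ℂ → ℂ) : ℂ → ℂ := fun a => (f a - f (q * a)) / a

noncomputable def thetaq (q : ℂ) (f : ℂ → ℂ) : ℂ → ℂ := fun a => (f (a / q) - f a) / (a / q)

noncomputable def qIntegral (q : ℂ) (f : ℂ → ℂ) (c d : ℂ) : ℂ :=
  (1 - q) * ∑' n : ℕ, q ^ n * (d * f (d * q ^ n) - c * f (c * q ^ n))

lemma qPoch_succ (q a : ℂ) (k : ℕ) : qPoch q a (k+1) = qPoch q a k * (1 - a * q ^ k) :=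
  Finset.prod_range_succ _ _

lemma qPoch_succ' (q a : ℂ) (k : ℕ) : qPoch q a (k+1) = (1 - a) * qPoch q (a*q) k := by
  rw [qPoch, Finset.prod_range_succ']
  simp only [pow_zero, mul_one, qPoch]
  rw [mul_comm]
  congr 1
  apply Finset.prod_congr rfl
  intro i _
  ring

lemma qPoch_zero (q a : ℂ) : qPoch q a 0 = 1 := Finset.prod_range_zero _

lemma P_ne (q : ℝ) (hq0 : 0 < q) (hq1 : q < 1) (k : ℕ) : qPoch (q:ℂ) (q:ℂ) k ≠ 0 := by
  rw [qPoch, Finset.prod_ne_zero_iff]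
  intro i _
  have h : ((q:ℂ)) * (q:ℂ)^i = ((q^(i+1) : ℝ) : ℂ) := by push_cast; ring
  rw [h, sub_ne_zero]
  intro hc
  have : (q:ℝ)^(i+1) = 1 := by exact_mod_cast hc.symm
  have h2 : q^(i+1) < 1 := pow_lt_one₀ hq0.le hq1 (Nat.succ_ne_zero i)
  linarith

lemma trec (q : ℝ) (hq0 : 0 < q) (hq1 : q < 1) (n k : ℕ) :
    (q:ℂ)^(k+1) * qPoch (q:ℂ) ((q:ℂ)^(-((n:ℤ)+1))) (k+1) / qPoch (q:ℂ) (q:ℂ) (k+1)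
      = (q:ℂ)^(k+1) * qPoch (q:ℂ) ((q:ℂ)^(-(n:ℤ))) (k+1) / qPoch (q:ℂ) (q:ℂ) (k+1)
        - (q:ℂ)^(-(n:ℤ)) * ((q:ℂ)^k * qPoch (q:ℂ) ((q:ℂ)^(-(n:ℤ))) k / qPoch (q:ℂ) (q:ℂ) k) := by
  have hQ : (q:ℂ) ≠ 0 := by exact_mod_cast hq0.ne'
  have hshift : (q:ℂ)^(-((n:ℤ)+1)) * (q:ℂ) = (q:ℂ)^(-(n:ℤ)) := by
    rw [show -((n:ℤ)+1) = -(n:ℤ) - 1 by ring, zpow_sub_one₀ hQ]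
    field_simp
  have hv : (q:ℂ)^(-((n:ℤ)+1)) = (q:ℂ)^(-(n:ℤ)) / (q:ℂ) := by
    rw [eq_div_iff hQ]; exact hshift
  rw [qPoch_succ' (q:ℂ) ((q:ℂ)^(-((n:ℤ)+1))), hshift, qPoch_succ (q:ℂ) ((q:ℂ)^(-(n:ℤ))),
    qPoch_succ (q:ℂ) (q:ℂ), hv]
  set A := qPoch (q:ℂ) ((q:ℂ)^(-(n:ℤ))) k with hA
  set P := qPoch (q:ℂ) (q:ℂ) k with hP'
  have hP : P ≠ 0 := P_ne q hq0 hq1 k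
  have hc : (1 - (q:ℂ)*(q:ℂ)^k) ≠ 0 := by
    have h := P_ne q hq0 hq1 (k+1)
    rw [qPoch_succ] at h; exact right_ne_zero_of_mul h
  field_simp
  ring

lemma key (q : ℝ) (hq0 : 0 < q) (hq1 : q < 1) (n : ℕ) : ∀ b : ℂ,
    ∑ k ∈ Finset.range (n+1),
      (q:ℂ)^k * qPoch (q:ℂ) ((q:ℂ)^(-(n:ℤ))) k / qPoch (q:ℂ) (q:ℂ) k * qPoch (q:ℂ) b k
      = b^n := by
  have hQ : (q:ℂ) ≠ 0 := by exact_mod_cast hq0.ne'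
  induction n with
  | zero => intro b; simp [qPoch]
  | succ n ih =>
    intro b
    have hzero : qPoch (q:ℂ) ((q:ℂ)^(-(n:ℤ))) (n+1) = 0 := by
      rw [qPoch]
      apply Finset.prod_eq_zero (Finset.self_mem_range_succ n)
      rw [← zpow_natCast (q:ℂ) n, ← zpow_add₀ hQ]
      simp
    have hcast : (-((n+1 : ℕ) : ℤ)) = -((n:ℤ)+1) := by push_cast; ring
    rw [Finset.sum_range_succ']
    simp only [hcast, trec q hq0 hq1 n, sub_mul, Finset.sum_sub_distrib,
      qPoch_zero, pow_zero, mul_one, one_mul, div_one]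
    have h1 : (∑ k ∈ Finset.range (n+1),
        (q:ℂ)^(k+1) * qPoch (q:ℂ) ((q:ℂ)^(-(n:ℤ))) (k+1) / qPoch (q:ℂ) (q:ℂ) (k+1)
          * qPoch (q:ℂ) b (k+1))
        + 1 = b^n := by
      have h := Finset.sum_range_succ' (fun k =>
        (q:ℂ)^k * qPoch (q:ℂ) ((q:ℂ)^(-(n:ℤ))) k / qPoch (q:ℂ) (q:ℂ) k * qPoch (q:ℂ) b k) (n+1)
      simp only [qPoch_zero, pow_zero, mul_one, one_mul, div_one] at h
      rw [← h, Finset.sum_range_succ, ih b, hzero]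
      ring
    have h2 : ∑ k ∈ Finset.range (n+1),
        (q:ℂ)^(-(n:ℤ)) * ((q:ℂ)^k * qPoch (q:ℂ) ((q:ℂ)^(-(n:ℤ))) k / qPoch (q:ℂ) (q:ℂ) k)
          * qPoch (q:ℂ) b (k+1)
        = (q:ℂ)^(-(n:ℤ)) * (1-b) * (b * q)^n := by
      rw [← ih (b * q), Finset.mul_sum]
      apply Finset.sum_congr rfl
      intro k _
      rw [qPoch_succ' (q:ℂ) b k]
      ring
    have hun : (q:ℂ)^(-(n:ℤ)) * (q:ℂ)^n = 1 := by
      rw [← zpow_natCast (q:ℂ) n, ← zpow_add₀ hQ]; simp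
    have hE : (q:ℂ)^(-(n:ℤ)) * (1-b) * (b * q)^n = (1-b) * b^n := by
      rw [mul_pow]
      calc (q:ℂ)^(-(n:ℤ)) * (1-b) * (b^n * (q:ℂ)^n)
          = ((q:ℂ)^(-(n:ℤ)) * (q:ℂ)^n) * ((1-b) * b^n) := by ring
        _ = (1-b) * b^n := by rw [hun, one_mul]
    linear_combination h1 - h2 - hE

theorem phi21_qinvn_ax (q : ℝ) (hq0 : 0 < q) (hq1 : q < 1) (n : ℕ) (a x : ℂ) :
    ∑ k ∈ Finset.range (n + 1),
        qPoch (q : ℂ) ((q : ℂ) ^ (-(n : ℤ))) k * qPoch (q : ℂ) (a * x) k /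
          qPoch (q : ℂ) (q : ℂ) k * (q : ℂ) ^ k
      = (a * x) ^ n := by
  rw [← key q hq0 hq1 n (a * x)]
  apply Finset.sum_congr rfl
  intro k _
  ring
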